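/- Let C be a nontrivial 1-perfect code in the Johnson scheme J(2w+a, w) with w ≥ 1, a ≥ 0, and let k be a positive integer. If the polynomial σ_1(w,a,m) = m² − (2w+a+1)m + w(w+a) + 1 has no integer root m with 1 ≤ m ≤ k, then C is k-regular. -/

import Mathlib

open scoped BigOperators

/-- A code in the Johnson scheme `J(n,w)`: a set of `w`-element subsets of `{1,…,n}`. -/
def IsJohnsonCode (n w : ℕ) (C : Set (Finset (Fin n))) : Prop :=
  ∀ c ∈ C, c.card = w

/-- `C` is a 1-perfect code in `J(n,w)`: every `w`-subset of `{1,…,n}` is within Johnson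
distance 1 (Johnson distance between `w`-sets `x`, `y` is `w - |x ∩ y|`) of exactly
one codeword of `C`. -/
def IsOnePerfect (n w : ℕ) (C : Set (Finset (Fin n))) : Prop :=
  IsJohnsonCode n w C ∧
    ∀ s : Finset (Fin n), s.card = w → ∃! c, c ∈ C ∧ w - (c ∩ s).card ≤ 1

/-- `C` is `k`-regular: (1) the number of codewords meeting a `k`-set `A` in exactly `i`
points depends only on `i`, and (2) for each `k`-set `A`, the number of codewords `c`
with `c ∩ A = I` depends only on `|I|` (for `I ⊆ A`). -/
def IsKRegularCode (n k : ℕ) (C : Set (Finset (Fin n))) : Prop :=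
  (∃ α : ℕ → ℕ, ∀ A : Finset (Fin n), A.card = k → ∀ i, i ≤ k →
      {c ∈ C | (c ∩ A).card = i}.ncard = α i) ∧
  (∀ A : Finset (Fin n), A.card = k → ∃ β : ℕ → ℕ,
      ∀ I : Finset (Fin n), I ⊆ A → {c ∈ C | c ∩ A = I}.ncard = β I.card)

section JohnsonAux

open Finset

variable {α : Type*} [DecidableEq α] [Fintype α]


lemma swap_inter {c : Finset α} {x y : α} (hx : x ∈ c) (hy : y ∉ c) :
    c ∩ insert y (c.erase x) = c.erase x := by
  ext a
  simp only [mem_inter, mem_insert, mem_erase]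
  constructor
  · rintro ⟨ha, rfl | h⟩
    · exact absurd ha hy
    · exact h
  · rintro ⟨hne, ha⟩; exact ⟨ha, Or.inr ⟨hne, ha⟩⟩

lemma swap_card {c : Finset α} {x y : α} (hx : x ∈ c) (hy : y ∉ c) :
    (insert y (c.erase x)).card = c.card := by
  rw [card_insert_of_notMem (fun h => hy (mem_of_mem_erase h)), card_erase_of_mem hx]
  have : 1 ≤ c.card := card_pos.mpr ⟨x, hx⟩
  omega

lemma swap_repr {c s : Finset α} (hcs : s.card = c.card)
    (hd : c.card ≤ (c ∩ s).card + 1) (hne : s ≠ c) :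
    ∃ x, x ∈ c ∧ ∃ y, y ∉ c ∧ y ∈ s ∧ s = insert y (c.erase x) := by
  have h1 : (c ∩ s).card + (c \ s).card = c.card := card_inter_add_card_sdiff c s
  have h2 : (s ∩ c).card + (s \ c).card = s.card := card_inter_add_card_sdiff s c
  have hic : s ∩ c = c ∩ s := inter_comm s c
  have hcsne : (c \ s).Nonempty := by
    rw [sdiff_nonempty]
    intro hsub
    exact hne (Finset.eq_of_subset_of_card_le hsub (le_of_eq hcs)).symm
  have hcs1 : (c \ s).card = 1 := by
    have := card_pos.mpr hcsne; omega
  have hsc1 : (s \ c).card = 1 := by rw [hic] at h2; omega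
  obtain ⟨x, hxeq⟩ := card_eq_one.mp hcs1
  obtain ⟨y, hyeq⟩ := card_eq_one.mp hsc1
  have hxc : x ∈ c := by
    have : x ∈ c \ s := hxeq ▸ mem_singleton_self x
    exact (mem_sdiff.mp this).1
  have hysc : y ∈ s \ c := hyeq ▸ mem_singleton_self y
  refine ⟨x, hxc, y, (mem_sdiff.mp hysc).2, (mem_sdiff.mp hysc).1, ?_⟩
  have hsi : s ∩ c = c.erase x := by
    rw [hic, erase_eq, ← hxeq]
    rw [sdiff_sdiff_self_left]
  have : (s ∩ c) ∪ (s \ c) = s := by rw [union_comm]; exact sdiff_union_inter s c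
  rw [← this, hsi, hyeq, union_comm, ← insert_eq]

def TT (w : ℕ) (A c : Finset α) : Finset (Finset α) :=
  univ.filter (fun s => s.card = w ∧ s ∩ A = ∅ ∧ w ≤ (c ∩ s).card + 1)

lemma mem_TT {w : ℕ} {A c s : Finset α} :
    s ∈ TT w A c ↔ s.card = w ∧ s ∩ A = ∅ ∧ w ≤ (c ∩ s).card + 1 := by
  simp [TT]

lemma TT_card_two {w : ℕ} {A c : Finset α} (hc : c.card = w) (h2 : 2 ≤ (c ∩ A).card) :
    TT w A c = ∅ := by
  ext s
  simp only [mem_TT, notMem_empty, iff_false]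
  rintro ⟨hsw, hsA, hd⟩
  have hdisj : Disjoint (c ∩ s) (c ∩ A) := by
    rw [disjoint_iff_inter_eq_empty]
    ext a
    simp only [mem_inter, notMem_empty, iff_false]
    rintro ⟨⟨-, has⟩, ⟨-, haA⟩⟩
    have : a ∈ s ∩ A := mem_inter.mpr ⟨has, haA⟩
    simp [hsA] at this
  have : (c ∩ s).card + (c ∩ A).card ≤ c.card := by
    rw [← card_union_of_disjoint hdisj]
    exact card_le_card (union_subset (inter_subset_left) (inter_subset_left))
  omega

lemma insert_erase_inter_empty {A c : Finset α} {x y : α}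
    (hcA : ∀ a, a ∈ c → a ∈ A → a = x) (hyA : y ∉ A) :
    insert y (c.erase x) ∩ A = ∅ := by
  ext a
  simp only [mem_inter, mem_insert, mem_erase, notMem_empty, iff_false]
  rintro ⟨rfl | ⟨hne, hac⟩, haA⟩
  · exact hyA haA
  · exact hne (hcA a hac haA)

lemma TT_card_zero {w : ℕ} {A c : Finset α} (hw : 1 ≤ w) (hc : c.card = w) (h0 : c ∩ A = ∅) :
    (TT w A c).card = 1 + w * (Fintype.card α - (w + A.card)) := by
  have hdisj : Disjoint c A := disjoint_iff_inter_eq_empty.mpr h0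
  have hcupA : (c ∪ A).card = w + A.card := by rw [card_union_of_disjoint hdisj, hc]
  have hTT : TT w A c
      = insert c ((c ×ˢ (c ∪ A)ᶜ).image fun p => insert p.2 (c.erase p.1)) := by
    ext s
    simp only [mem_TT, mem_insert, mem_image, mem_product, mem_compl, mem_union, Prod.exists]
    constructor
    · rintro ⟨hsw, hsA, hd⟩
      by_cases hsc : s = c
      · exact Or.inl hsc
      · obtain ⟨x, hx, y, hyc, hys, hseq⟩ :=
          swap_repr (hsw.trans hc.symm) (by rw [hc]; exact hd) hsc
        have hyA : y ∉ A := by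
          intro hyA
          have : y ∈ s ∩ A := mem_inter.mpr ⟨hys, hyA⟩
          simp [hsA] at this
        exact Or.inr ⟨x, y, ⟨hx, fun h => h.elim hyc hyA⟩, hseq.symm⟩
    · rintro (rfl | ⟨x, y, ⟨hx, hy⟩, rfl⟩)
      · exact ⟨hc, h0, by rw [inter_self, hc]; omega⟩
      · have hyc : y ∉ c := fun h => hy (Or.inl h)
        have hyA : y ∉ A := fun h => hy (Or.inr h)
        refine ⟨(swap_card hx hyc).trans hc, ?_, ?_⟩
        · refine insert_erase_inter_empty (fun a hac haA => ?_) hyA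
          have : a ∈ c ∩ A := mem_inter.mpr ⟨hac, haA⟩
          simp [h0] at this
        · rw [swap_inter hx hyc, card_erase_of_mem hx, hc]
          omega
  have hinj : Set.InjOn (fun p : α × α => insert p.2 (c.erase p.1)) ↑(c ×ˢ (c ∪ A)ᶜ) := by
    rintro ⟨x1, y1⟩ h1 ⟨x2, y2⟩ h2 heq
    simp only [mem_coe, mem_product, mem_compl, mem_union] at h1 h2
    have hy1c : y1 ∉ c := fun h => h1.2 (Or.inl h)
    have hy2c : y2 ∉ c := fun h => h2.2 (Or.inl h)
    simp only at heq
    have hyy : y1 = y2 := by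
      have : y1 ∈ insert y2 (c.erase x2) := heq ▸ mem_insert_self y1 (c.erase x1)
      rcases mem_insert.mp this with h | h
      · exact h
      · exact absurd (mem_of_mem_erase h) hy1c
    subst hyy
    have herase : c.erase x1 = c.erase x2 := by
      have e1 : (insert y1 (c.erase x1)).erase y1 = c.erase x1 :=
        erase_insert (fun h => hy1c (mem_of_mem_erase h))
      have e2 : (insert y1 (c.erase x2)).erase y1 = c.erase x2 :=
        erase_insert (fun h => hy1c (mem_of_mem_erase h))
      rw [← e1, ← e2, heq]
    have : x1 = x2 := by
      by_contra hne
      have : x1 ∈ c.erase x2 := mem_erase.mpr ⟨hne, h1.1⟩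
      rw [← herase] at this
      exact (notMem_erase x1 c) this
    simp [this]
  have hnmem : c ∉ (c ×ˢ (c ∪ A)ᶜ).image fun p => insert p.2 (c.erase p.1) := by
    intro hmem
    simp only [mem_image, mem_product, Prod.exists] at hmem
    obtain ⟨x, y, ⟨hx, hy⟩, heq⟩ := hmem
    simp only [mem_compl, mem_union] at hy
    have hyc : y ∉ c := fun h => hy (Or.inl h)
    exact hyc (heq ▸ mem_insert_self y (c.erase x))
  rw [hTT, card_insert_of_notMem hnmem, card_image_of_injOn hinj, card_product, card_compl,
    hcupA, hc]
  omega

lemma TT_card_one {w : ℕ} {A c : Finset α} (hc : c.card = w) (h1 : (c ∩ A).card = 1) :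
    (TT w A c).card = Fintype.card α + 1 - (w + A.card) := by
  obtain ⟨u, hu⟩ := card_eq_one.mp h1
  have huc : u ∈ c := (mem_inter.mp (hu ▸ mem_singleton_self u)).1
  have huA : u ∈ A := (mem_inter.mp (hu ▸ mem_singleton_self u)).2
  have hw1 : 1 ≤ w := hc ▸ card_pos.mpr ⟨u, huc⟩
  have hTT : TT w A c = ((c ∪ A)ᶜ).image (fun y => insert y (c.erase u)) := by
    ext s
    simp only [mem_TT, mem_image, mem_compl, mem_union]
    constructor
    · rintro ⟨hsw, hsA, hd⟩
      have hus : u ∉ s := by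
        intro hus
        have : u ∈ s ∩ A := mem_inter.mpr ⟨hus, huA⟩
        simp [hsA] at this
      have hsc : s ≠ c := fun h => hus (h ▸ huc)
      obtain ⟨x, hx, y, hyc, hys, hseq⟩ :=
        swap_repr (hsw.trans hc.symm) (by rw [hc]; exact hd) hsc
      have hyA : y ∉ A := by
        intro hyA
        have : y ∈ s ∩ A := mem_inter.mpr ⟨hys, hyA⟩
        simp [hsA] at this
      have hxu : x = u := by
        by_contra hne
        have : u ∈ insert y (c.erase x) := mem_insert.mpr (Or.inr (mem_erase.mpr ⟨fun h => hne h.symm, huc⟩))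
        rw [← hseq] at this
        exact hus this
      exact ⟨y, fun h => h.elim hyc hyA, by rw [← hxu, ← hseq]⟩
    · rintro ⟨y, hy, rfl⟩
      have hyc : y ∉ c := fun h => hy (Or.inl h)
      have hyA : y ∉ A := fun h => hy (Or.inr h)
      refine ⟨(swap_card huc hyc).trans hc, ?_, ?_⟩
      · refine insert_erase_inter_empty (fun a hac haA => ?_) hyA
        have : a ∈ c ∩ A := mem_inter.mpr ⟨hac, haA⟩
        rw [hu, mem_singleton] at this
        exact this
      · rw [swap_inter huc hyc, card_erase_of_mem huc, hc]
        omega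
  have hinj : Set.InjOn (fun y => insert y (c.erase u)) ↑((c ∪ A)ᶜ) := by
    intro y1 h1' y2 h2' heq
    simp only [mem_coe, mem_compl, mem_union] at h1' h2'
    have hy1c : y1 ∉ c := fun h => h1' (Or.inl h)
    simp only at heq
    have : y1 ∈ insert y2 (c.erase u) := heq ▸ mem_insert_self y1 (c.erase u)
    rcases mem_insert.mp this with h | h
    · exact h
    · exact absurd (mem_of_mem_erase h) hy1c
  have hcA : (c ∪ A).card = w + A.card - 1 := by
    have := card_union_add_card_inter c A
    rw [hc, h1] at this
    omega
  have hle : (c ∪ A).card ≤ Fintype.card α := card_le_univ _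
  rw [hTT, card_image_of_injOn hinj, card_compl, hcA]
  omega

def Xc (Cf : Finset (Finset α)) (A I : Finset α) : ℕ := (Cf.filter fun c => c ∩ A = I).card

lemma filter_singleton_card {A c : Finset α} :
    (A.filter fun u => c ∩ A = {u}).card = if (c ∩ A).card = 1 then 1 else 0 := by
  split_ifs with h
  · obtain ⟨u0, hu0⟩ := card_eq_one.mp h
    have hu0A : u0 ∈ A := (mem_inter.mp (hu0 ▸ mem_singleton_self u0)).2
    rw [card_eq_one]
    refine ⟨u0, ?_⟩
    ext u
    simp only [mem_filter, mem_singleton]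
    constructor
    · rintro ⟨-, hcu⟩
      exact singleton_injective (hcu.symm.trans hu0)
    · rintro rfl; exact ⟨hu0A, hu0⟩
  · rw [card_eq_zero, filter_eq_empty_iff]
    intro u _ hcu
    exact h (by rw [hcu]; exact card_singleton u)

lemma sum_singleton_classes {Cf : Finset (Finset α)} {A : Finset α} :
    ∑ u ∈ A, Xc Cf A {u} = (Cf.filter fun c => (c ∩ A).card = 1).card := by
  unfold Xc
  rw [card_filter]
  rw [Finset.sum_congr rfl fun u (_ : u ∈ A) => card_filter (fun c => c ∩ A = {u}) Cf]
  rw [Finset.sum_comm]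
  refine Finset.sum_congr rfl fun c _ => ?_
  rw [← card_filter, filter_singleton_card]

lemma double_count {w : ℕ} {Cf : Finset (Finset α)} (hw : 1 ≤ w)
    (hCw : ∀ c ∈ Cf, c.card = w)
    (huniq : ∀ s : Finset α, s.card = w →
      (Cf.filter fun c => w ≤ (c ∩ s).card + 1).card = 1)
    (A : Finset α) :
    (1 + w * (Fintype.card α - (w + A.card))) * Xc Cf A ∅
      + (Fintype.card α + 1 - (w + A.card)) * ∑ u ∈ A, Xc Cf A {u}
      = (Fintype.card α - A.card).choose w := by
  classical
  set S : Finset (Finset α) := (Aᶜ).powersetCard w with hS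
  have hmemS : ∀ s : Finset α, s ∈ S ↔ s.card = w ∧ s ∩ A = ∅ := by
    intro s
    rw [hS, mem_powersetCard]
    constructor
    · rintro ⟨hsub, hcard⟩
      exact ⟨hcard, disjoint_iff_inter_eq_empty.mp (le_compl_iff_disjoint_right.mp hsub)⟩
    · rintro ⟨hcard, hint⟩
      exact ⟨le_compl_iff_disjoint_right.mpr (disjoint_iff_inter_eq_empty.mpr hint), hcard⟩
  have hScard : S.card = (Fintype.card α - A.card).choose w := by
    rw [hS, card_powersetCard, card_compl]
  have hsum1 : S.card = ∑ s ∈ S, (Cf.filter fun c => w ≤ (c ∩ s).card + 1).card := by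
    rw [card_eq_sum_ones]
    exact Finset.sum_congr rfl fun s hs => (huniq s ((hmemS s).mp hs).1).symm
  have hswap : ∑ s ∈ S, (Cf.filter fun c => w ≤ (c ∩ s).card + 1).card
      = ∑ c ∈ Cf, (TT w A c).card := by
    rw [Finset.sum_congr rfl fun s (_ : s ∈ S) => card_filter (fun c => w ≤ (c ∩ s).card + 1) Cf]
    rw [Finset.sum_comm]
    refine Finset.sum_congr rfl fun c _ => ?_
    rw [← card_filter]
    congr 1
    ext s
    simp only [mem_filter, mem_TT, hmemS s]
    tauto
  have hsplit : ∑ c ∈ Cf, (TT w A c).card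
      = (1 + w * (Fintype.card α - (w + A.card))) * Xc Cf A ∅
        + (Fintype.card α + 1 - (w + A.card)) * (Cf.filter fun c => (c ∩ A).card = 1).card := by
    rw [← Finset.sum_filter_add_sum_filter_not Cf (fun c => c ∩ A = ∅)]
    have e0 : ∑ c ∈ Cf.filter (fun c => c ∩ A = ∅), (TT w A c).card
        = (1 + w * (Fintype.card α - (w + A.card))) * Xc Cf A ∅ := by
      rw [Finset.sum_congr rfl (fun c hc => ?_), Finset.sum_const, smul_eq_mul, mul_comm]
      · rfl
      · rw [mem_filter] at hc
        exact TT_card_zero hw (hCw c hc.1) hc.2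
    rw [e0]
    congr 1
    rw [← Finset.sum_filter_add_sum_filter_not (Cf.filter fun c => ¬ c ∩ A = ∅)
      (fun c => (c ∩ A).card = 1)]
    have e2 : ∑ c ∈ (Cf.filter fun c => ¬ c ∩ A = ∅).filter (fun c => ¬ (c ∩ A).card = 1),
        (TT w A c).card = 0 := by
      refine Finset.sum_eq_zero fun c hc => ?_
      simp only [mem_filter] at hc
      have h2 : 2 ≤ (c ∩ A).card := by
        have : (c ∩ A).card ≠ 0 := fun h => hc.1.2 (card_eq_zero.mp h)
        omega
      rw [TT_card_two (hCw c hc.1.1) h2, card_empty]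
    rw [e2, add_zero]
    have e1 : (Cf.filter fun c => ¬ c ∩ A = ∅).filter (fun c => (c ∩ A).card = 1)
        = Cf.filter fun c => (c ∩ A).card = 1 := by
      rw [filter_filter]
      refine filter_congr fun c _ => ?_
      constructor
      · rintro ⟨-, h⟩; exact h
      · intro h
        refine ⟨fun he => ?_, h⟩
        rw [he, card_empty] at h; omega
    rw [e1]
    rw [Finset.sum_congr rfl (fun c hc => ?_), Finset.sum_const, smul_eq_mul, mul_comm]
    rw [mem_filter] at hc
    exact TT_card_one (hCw c hc.1) hc.2
  rw [← hScard, hsum1, hswap, hsplit, sum_singleton_classes]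

lemma Xc_erase {Cf : Finset (Finset α)} {A K : Finset α} {u : α} (huA : u ∈ A) (huK : u ∉ K) :
    Xc Cf (A.erase u) K = Xc Cf A K + Xc Cf A (insert u K) := by
  unfold Xc
  rw [← card_union_of_disjoint, ← filter_or]
  · refine congrArg card (filter_congr fun c _ => ?_)
    rw [inter_erase]
    constructor
    · intro h
      by_cases hu : u ∈ c ∩ A
      · right; rw [← insert_erase hu, h]
      · left; rw [← erase_eq_of_notMem hu, h]
    · rintro (h | h) <;> rw [h]
      · exact erase_eq_of_notMem huK
      · exact erase_insert huK
  · rw [Finset.disjoint_filter]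
    rintro c _ rfl h
    exact huK (h ▸ mem_insert_self u (c ∩ A))

lemma sum_classes {Cf : Finset (Finset α)} {A : Finset α} {j v : ℕ}
    (hconst : ∀ I, I ⊆ A → I.card = j → Xc Cf A I = v) :
    (Cf.filter fun c => (c ∩ A).card = j).card = A.card.choose j * v := by
  have h1 : ∑ I ∈ A.powersetCard j, Xc Cf A I
      = (Cf.filter fun c => (c ∩ A).card = j).card := by
    unfold Xc
    rw [Finset.sum_congr rfl fun I (_ : I ∈ A.powersetCard j) =>
      card_filter (fun c => c ∩ A = I) Cf]
    rw [Finset.sum_comm, card_filter]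
    refine Finset.sum_congr rfl fun c _ => ?_
    have : ∑ I ∈ A.powersetCard j, (if c ∩ A = I then 1 else 0)
        = ((A.powersetCard j).filter (Eq (c ∩ A))).card := by
      rw [card_filter]
    rw [this, filter_eq]
    by_cases hmem : c ∩ A ∈ A.powersetCard j
    · rw [if_pos hmem, card_singleton, if_pos (mem_powersetCard.mp hmem).2]
    · rw [if_neg hmem, card_empty,
        if_neg (fun h => hmem (mem_powersetCard.mpr ⟨inter_subset_right, h⟩))]
  rw [← h1, Finset.sum_congr rfl fun I hI =>
    hconst I (mem_powersetCard.mp hI).1 (mem_powersetCard.mp hI).2, Finset.sum_const,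
    card_powersetCard, smul_eq_mul]

theorem stmt_1' (w a k n : ℕ) (hw : 1 ≤ w) (hk : 0 < k) (hn : n = 2 * w + a)
    (C : Set (Finset (Fin n)))
    (hperf : (∀ c ∈ C, c.card = w) ∧
      ∀ s : Finset (Fin n), s.card = w → ∃! c, c ∈ C ∧ w - (c ∩ s).card ≤ 1)
    (hroot : ∀ m : ℤ, 1 ≤ m → m ≤ (k : ℤ) →
      m ^ 2 - (2 * (w : ℤ) + a + 1) * m + (w : ℤ) * (w + a) + 1 ≠ 0) :
    (∃ αF : ℕ → ℕ, ∀ A : Finset (Fin n), A.card = k → ∀ i, i ≤ k →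
        {c ∈ C | (c ∩ A).card = i}.ncard = αF i) ∧
      (∀ A : Finset (Fin n), A.card = k → ∃ β : ℕ → ℕ,
        ∀ I : Finset (Fin n), I ⊆ A → {c ∈ C | c ∩ A = I}.ncard = β I.card) := by
  classical
  set Cf : Finset (Finset (Fin n)) := C.toFinite.toFinset with hCf
  have hmemCf : ∀ c, c ∈ Cf ↔ c ∈ C := fun c => C.toFinite.mem_toFinset
  have hbridge : ∀ (P : Finset (Fin n) → Prop),
      {c ∈ C | P c}.ncard = (Cf.filter P).card := by
    intro P
    rw [← Set.ncard_coe_finset]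
    congr 1
    ext c
    simp only [Finset.coe_filter, Set.mem_setOf_eq, hmemCf]
  have hCw : ∀ c ∈ Cf, c.card = w := fun c hc => hperf.1 c ((hmemCf c).mp hc)
  have huniq : ∀ s : Finset (Fin n), s.card = w →
      (Cf.filter fun c => w ≤ (c ∩ s).card + 1).card = 1 := by
    intro s hs
    obtain ⟨c₀, hc₀, hun⟩ := hperf.2 s hs
    rw [Finset.card_eq_one]
    refine ⟨c₀, ?_⟩
    ext c
    simp only [Finset.mem_filter, Finset.mem_singleton, hmemCf]
    constructor
    · rintro ⟨hcC, hd⟩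
      exact hun c ⟨hcC, by omega⟩
    · rintro rfl
      exact ⟨hc₀.1, by have := hc₀.2; omega⟩
  have hNcard : Fintype.card (Fin n) = n := Fintype.card_fin n
  -- main induction
  have main : ∀ m : ℕ, m ≤ k →
      (∃ αf : ℕ → ℕ, ∀ A : Finset (Fin n), A.card = m → ∀ i, i ≤ m →
        (Cf.filter fun c => (c ∩ A).card = i).card = αf i) ∧
      (∀ A : Finset (Fin n), A.card = m → ∀ I J, I ⊆ A → J ⊆ A → I.card = J.card →
        Xc Cf A I = Xc Cf A J) := by
    intro m
    induction m with
    | zero =>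
      intro _
      constructor
      · refine ⟨fun _ => Cf.card, fun A hA i hi => ?_⟩
        interval_cases i
        rw [Finset.card_eq_zero.mp hA]
        simp
      · intro A hA I J hI hJ hIJ
        rw [Finset.card_eq_zero.mp hA] at hI hJ
        rw [Finset.subset_empty.mp hI, Finset.subset_empty.mp hJ]
    | succ m ih =>
      intro hm1k
      obtain ⟨⟨αf, hαf⟩, hloc⟩ := ih (by omega)
      -- level-m: value of Xc determined by cardinality
      have hXm : ∀ A' : Finset (Fin n), A'.card = m → ∀ K, K ⊆ A' → K.card ≤ m →
          m.choose K.card * Xc Cf A' K = αf K.card := by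
        intro A' hA' K hK hKm
        have hconst : ∀ I, I ⊆ A' → I.card = K.card → Xc Cf A' I = Xc Cf A' K :=
          fun I hI hIc => hloc A' hA' I K hI hK hIc
        have hsc := sum_classes (Cf := Cf) (A := A') hconst
        have h2 := hαf A' hA' K.card hKm
        have hch : A'.card.choose K.card = m.choose K.card := by rw [hA']
        rw [hch] at hsc
        rw [← hsc, h2]
      have hXmeq : ∀ A' A'' : Finset (Fin n), A'.card = m → A''.card = m →
          ∀ K K', K ⊆ A' → K' ⊆ A'' → K.card = K'.card → K.card ≤ m →
          Xc Cf A' K = Xc Cf A'' K' := by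
        intro A' A'' hA' hA'' K K' hK hK' hKK' hKm
        have h1 := hXm A' hA' K hK hKm
        have h2 := hXm A'' hA'' K' hK' (hKK' ▸ hKm)
        have h2' : m.choose K.card * Xc Cf A'' K' = αf K.card := by rw [hKK']; exact h2
        have hpos : 0 < m.choose K.card := Nat.choose_pos hKm
        exact Nat.eq_of_mul_eq_mul_left hpos (h1.trans h2'.symm)
      -- swap lemma at level m+1
      have hswap : ∀ A : Finset (Fin n), A.card = m + 1 → ∀ K, K ⊆ A →
          ∀ u v, u ∈ A → v ∈ A → u ∉ K → v ∉ K →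
          Xc Cf A (insert u K) = Xc Cf A (insert v K) := by
        intro A hA K hK u v huA hvA huK hvK
        by_cases huv : u = v
        · rw [huv]
        have hKe : K ⊆ A.erase u := Finset.subset_erase.mpr ⟨hK, huK⟩
        have hKe' : K ⊆ A.erase v := Finset.subset_erase.mpr ⟨hK, hvK⟩
        have hcu : (A.erase u).card = m := by simp [Finset.card_erase_of_mem huA, hA]
        have hcv : (A.erase v).card = m := by simp [Finset.card_erase_of_mem hvA, hA]

        have hKm : K.card ≤ m := by
          have := Finset.card_le_card hKe; omega
        have e1 := Xc_erase (Cf := Cf) (K := K) huA huK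
        have e2 := Xc_erase (Cf := Cf) (K := K) hvA hvK
        have e3 : Xc Cf (A.erase u) K = Xc Cf (A.erase v) K :=
          hXmeq _ _ hcu hcv K K hKe hKe' rfl hKm
        omega
      -- local constancy at level m+1
      have hloc1 : ∀ A : Finset (Fin n), A.card = m + 1 → ∀ I J, I ⊆ A → J ⊆ A →
          I.card = J.card → Xc Cf A I = Xc Cf A J := by
        intro A hA
        have key : ∀ d I J, I ⊆ A → J ⊆ A → I.card = J.card → (I \ J).card = d →
            Xc Cf A I = Xc Cf A J := by
          intro d
          induction d with
          | zero =>
            intro I J hIA hJA hcard hd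
            have hsub : I ⊆ J := Finset.sdiff_eq_empty_iff_subset.mp (Finset.card_eq_zero.mp hd)
            rw [Finset.eq_of_subset_of_card_le hsub (le_of_eq hcard.symm)]
          | succ d ihd =>
            intro I J hIA hJA hcard hd
            have hJI : (J \ I).card = d + 1 := by
              have h1 := Finset.card_inter_add_card_sdiff I J
              have h2 := Finset.card_inter_add_card_sdiff J I
              rw [Finset.inter_comm J I] at h2
              omega
            obtain ⟨x, hx⟩ : (I \ J).Nonempty := by
              rw [← Finset.card_pos, hd]; omega
            obtain ⟨y, hy⟩ : (J \ I).Nonempty := by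
              rw [← Finset.card_pos, hJI]; omega
            rw [Finset.mem_sdiff] at hx hy
            set I' := insert y (I.erase x) with hI'
            have hyI : y ∉ I.erase x := fun h => hy.2 (Finset.mem_of_mem_erase h)
            have hxI : x ∉ I.erase x := Finset.notMem_erase x I
            have he0 : Xc Cf A I = Xc Cf A I' := by
              rw [← Finset.insert_erase hx.1, hI']
              exact hswap A hA (I.erase x) ((Finset.erase_subset x I).trans hIA)
                x y (hIA hx.1) (hJA hy.1) hxI hyI
            have hI'A : I' ⊆ A := Finset.insert_subset (hJA hy.1)
              ((Finset.erase_subset x I).trans hIA)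
            have hI'card : I'.card = J.card := by
              rw [hI', swap_card hx.1 (fun h => hy.2 h), hcard]
            have hI'J : (I' \ J).card = d := by
              have : I' \ J = (I \ J).erase x := by
                rw [hI']
                ext b
                simp only [Finset.mem_sdiff, Finset.mem_insert, Finset.mem_erase]
                constructor
                · rintro ⟨rfl | ⟨hbx, hbI⟩, hbJ⟩
                  · exact absurd hy.1 hbJ
                  · exact ⟨hbx, hbI, hbJ⟩
                · rintro ⟨hbx, hbI, hbJ⟩
                  exact ⟨Or.inr ⟨hbx, hbI⟩, hbJ⟩
              rw [this, Finset.card_erase_of_mem (Finset.mem_sdiff.mpr hx), hd]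
              omega
            rw [he0, ihd I' J hI'A hJA hI'card hI'J]
        intro I J hIA hJA hIJ
        exact key (I \ J).card I J hIA hJA hIJ rfl
      refine ⟨?_, hloc1⟩
      -- now condition (1) at level m+1 : need global constancy
      by_cases hexM : m + 1 ≤ n
      case neg =>
        -- no set of size m+1 exists
        refine ⟨fun _ => 0, fun A hA i hi => absurd ?_ hexM⟩
        have h := Finset.card_le_univ A
        rw [hNcard, hA] at h
        exact h
      case pos =>
      -- the value γ i = Xc at level m for card-i subsets
      set γ : ℕ → ℕ := fun i => αf i / m.choose i with hγ
      have hγval : ∀ A' : Finset (Fin n), A'.card = m → ∀ K, K ⊆ A' → K.card ≤ m →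
          Xc Cf A' K = γ K.card := by
        intro A' hA' K hK hKm
        have h := hXm A' hA' K hK hKm
        show Xc Cf A' K = αf K.card / m.choose K.card
        rw [← h, Nat.mul_div_cancel_left _ (Nat.choose_pos hKm)]
      -- global constancy of Xc _ ∅ over (m+1)-sets
      have hglob : ∀ A B : Finset (Fin n), A.card = m + 1 → B.card = m + 1 →
          Xc Cf A ∅ = Xc Cf B ∅ := by
        intro A B hA hB
        -- for any (m+1)-set D and u ∈ D : Xc Cf D ∅ + Xc Cf D {u} = γ 0
        have hsplit : ∀ D : Finset (Fin n), D.card = m + 1 → ∀ u ∈ D,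
            Xc Cf D ∅ + Xc Cf D {u} = γ 0 := by
          intro D hD u huD
          have e := Xc_erase (Cf := Cf) (K := (∅ : Finset (Fin n))) huD
            (Finset.notMem_empty u)
          rw [Finset.insert_empty] at e
          rw [← e]
          have hcD : (D.erase u).card = m := by simp [Finset.card_erase_of_mem huD, hD]
          have := hγval (D.erase u) hcD ∅ (Finset.empty_subset _) (by simp)
          simpa using this
        have hsum : ∀ D : Finset (Fin n), D.card = m + 1 →
            ∑ u ∈ D, Xc Cf D {u} = (m + 1) * (γ 0 - Xc Cf D ∅) ∧ Xc Cf D ∅ ≤ γ 0 := by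
          intro D hD
          have hne : D.Nonempty := Finset.card_pos.mp (by omega)
          obtain ⟨u₀, hu₀⟩ := hne
          have hle : Xc Cf D ∅ ≤ γ 0 := by
            have := hsplit D hD u₀ hu₀; omega
          refine ⟨?_, hle⟩
          rw [Finset.sum_congr rfl fun u huD => ?_, Finset.sum_const, smul_eq_mul, hD]
          have := hsplit D hD u huD; omega
        obtain ⟨hsumA, hleA⟩ := hsum A hA
        obtain ⟨hsumB, hleB⟩ := hsum B hB
        have dcA := double_count hw hCw huniq A
        have dcB := double_count hw hCw huniq B
        rw [hNcard, hA, hsumA] at dcA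
        rw [hNcard, hB, hsumB] at dcB
        by_cases hcase : w + (m + 1) ≤ n
        · -- coefficient is σ₁ ≠ 0
          set x := Xc Cf A ∅
          set x' := Xc Cf B ∅
          have heqZ : ((1 : ℤ) + w * ((n : ℤ) - (w + (m + 1)))) * x
              + ((n : ℤ) + 1 - (w + (m + 1))) * ((m + 1) * ((γ 0 : ℤ) - x))
              = ((1 : ℤ) + w * ((n : ℤ) - (w + (m + 1)))) * x'
              + ((n : ℤ) + 1 - (w + (m + 1))) * ((m + 1) * ((γ 0 : ℤ) - x')) := by
            have hc := congrArg (Nat.cast : ℕ → ℤ) (dcA.trans dcB.symm)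
            push_cast [Nat.cast_sub hcase, Nat.cast_sub hleA, Nat.cast_sub hleB,
              Nat.cast_sub (le_trans hcase (Nat.le_succ n))] at hc
            linarith [hc]
          have hfac : (((1 : ℤ) + w * ((n : ℤ) - (w + (m + 1))))
              - ((n : ℤ) + 1 - (w + (m + 1))) * (m + 1)) * ((x : ℤ) - x') = 0 := by
            ring_nf
            ring_nf at heqZ
            linarith [heqZ]
          have hne0 : (((1 : ℤ) + w * ((n : ℤ) - (w + (m + 1))))
              - ((n : ℤ) + 1 - (w + (m + 1))) * (m + 1)) ≠ 0 := by
            intro h0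
            refine hroot (m + 1) (by omega) (by exact_mod_cast Nat.cast_le.mpr hm1k) ?_
            have hnz : (n : ℤ) = 2 * w + a := by exact_mod_cast congrArg (Nat.cast : ℕ → ℤ) hn
            rw [hnz] at h0
            ring_nf at h0 ⊢
            linarith [h0]
          rcases mul_eq_zero.mp hfac with h | h
          · exact absurd h hne0
          · exact_mod_cast sub_eq_zero.mp h
        · -- both sides are zero
          have hzero : ∀ D : Finset (Fin n), D.card = m + 1 → Xc Cf D ∅ = 0 := by
            intro D hD
            unfold Xc
            rw [Finset.card_eq_zero, Finset.filter_eq_empty_iff]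
            intro c hc hcD
            have hdisj : Disjoint c D := Finset.disjoint_iff_inter_eq_empty.mpr hcD
            have : (c ∪ D).card = w + (m + 1) := by
              rw [Finset.card_union_of_disjoint hdisj, hCw c hc, hD]
            have hle : (c ∪ D).card ≤ n := by
              have h := Finset.card_le_univ (c ∪ D)
              rwa [hNcard] at h
            omega
          rw [hzero A hA, hzero B hB]
      -- construct the common value function y
      obtain ⟨A₀, hA₀sub, hA₀⟩ := Finset.exists_subset_card_eq (s := (Finset.univ : Finset (Fin n)))
        (n := m + 1) (by rw [Finset.card_univ, hNcard]; exact hexM)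
      set y : ℕ → ℕ := fun i => Nat.rec (Xc Cf A₀ ∅) (fun i yi => γ i - yi) i with hy
      have hyval : ∀ i, i ≤ m + 1 → ∀ A : Finset (Fin n), A.card = m + 1 →
          ∀ I, I ⊆ A → I.card = i → Xc Cf A I = y i := by
        intro i
        induction i with
        | zero =>
          intro _ A hA I hI hIc
          rw [Finset.card_eq_zero.mp hIc]
          exact hglob A A₀ hA hA₀
        | succ i ihi =>
          intro hi1 A hA I hI hIc
          obtain ⟨x, hx⟩ : I.Nonempty := Finset.card_pos.mp (by omega)
          set K := I.erase x with hK
          have hKI : K ⊆ A := (Finset.erase_subset x I).trans hI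
          have hKcard : K.card = i := by simp [hK, Finset.card_erase_of_mem hx, hIc]
          have hxA : x ∈ A := hI hx
          have hxK : x ∉ K := Finset.notMem_erase x I
          have e := Xc_erase (Cf := Cf) (K := K) hxA hxK
          rw [Finset.insert_erase hx] at e
          have hγK : Xc Cf (A.erase x) K = γ i := by
            rw [← hKcard]
            refine hγval (A.erase x) ?_ K (Finset.subset_erase.mpr ⟨hKI, hxK⟩) ?_
            · simp [Finset.card_erase_of_mem hxA, hA]
            · rw [hKcard]; omega
          have hyK : Xc Cf A K = y i := ihi (by omega) A hA K hKI hKcard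
          have : y (i + 1) = γ i - y i := rfl
          omega
      refine ⟨fun i => (m + 1).choose i * y i, fun A hA i hi => ?_⟩
      have hconst : ∀ I, I ⊆ A → I.card = i → Xc Cf A I = y i :=
        fun I hI hIc => hyval i hi A hA I hI hIc
      have := sum_classes (Cf := Cf) (A := A) hconst
      rw [hA] at this
      exact this
  -- convert
  obtain ⟨⟨αf, hαf⟩, hlock⟩ := main k le_rfl
  constructor
  · refine ⟨αf, fun A hA i hi => ?_⟩
    rw [hbridge]
    convert hαf A hA i hi using 2
    exact Finset.filter_congr_decidable _ _ _
  · intro A hA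
    have hpick : ∀ i, i ≤ k → ∃ I, I ⊆ A ∧ I.card = i := by
      intro i hi
      exact Finset.exists_subset_card_eq (s := A) (n := i) (by omega)
    choose f hf1 hf2 using fun i => hpick i
    refine ⟨fun i => if hi : i ≤ k then Xc Cf A (f i hi) else 0, fun I hI => ?_⟩
    have hIk : I.card ≤ k := hA ▸ Finset.card_le_card hI
    rw [hbridge]
    have hl := hlock A hA I (f I.card hIk) hI (hf1 I.card hIk) ((hf2 I.card hIk).symm)
    simp only [dif_pos hIk]
    unfold Xc at hl ⊢
    convert hl using 2
    exact Finset.filter_congr_decidable _ _ _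

end JohnsonAux

/-- If the polynomial `σ₁(w,a,m) = m² - (2w+a+1)m + w(w+a) + 1` has no integer root
`m` with `1 ≤ m ≤ k`, then a nontrivial 1-perfect code in `J(2w+a, w)` is `k`-regular. -/
theorem stmt_1 (w a k : ℕ) (hw : 1 ≤ w) (hk : 0 < k)
    (C : Set (Finset (Fin (2 * w + a))))
    (hperf : IsOnePerfect (2 * w + a) w C) (hnontriv : C.Nontrivial)
    (hroot : ∀ m : ℤ, 1 ≤ m → m ≤ (k : ℤ) →
      m ^ 2 - (2 * (w : ℤ) + a + 1) * m + (w : ℤ) * (w + a) + 1 ≠ 0) :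
    IsKRegularCode (2 * w + a) k C :=
  stmt_1' w a k (2 * w + a) hw hk rfl C hperf hroot
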